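/- If a labeled graph G = (V, E) with V ⊂ ℕ contains four vertices i, j, k, ℓ with max{i,j} < min{k,ℓ}, such that the only edges among them are ik and jℓ (i.e., ik ∈ E, jℓ ∈ E, and ij, iℓ, jk, kℓ ∉ E), then G is not 12-representable. -/

import Mathlib

/-- A word has no 12-match iff no two consecutive letters form a strictly
increasing pair, i.e. the word is weakly decreasing at each step. -/
def NoMatch12 (w : List ℕ) : Prop := w.Chain' (fun a b => b ≤ a)

/-- `w` 12-represents the labeled graph with vertex set `V ⊂ ℕ` and edge relation
`E`: every vertex occurs in `w`, all letters of `w` are vertices, and for all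
distinct vertices `x, y`: `xy` is an edge iff the subsequence of `w` consisting of
occurrences of `x` and `y` has no 12-match. -/
def Rep12 (V : Finset ℕ) (E : ℕ → ℕ → Prop) (w : List ℕ) : Prop :=
  (∀ v ∈ V, v ∈ w) ∧ (∀ a ∈ w, a ∈ V) ∧
    ∀ x ∈ V, ∀ y ∈ V, x ≠ y →
      (E x y ↔ NoMatch12 (w.filter (fun a => a = x ∨ a = y)))

/-- Characterization: for `x < y`, the `{x,y}`-subsequence of `w` has no 12-match
iff `[x, y]` is not a sublist of `w`. -/
lemma noMatch12_iff_not_sublist {x y : ℕ} (hxy : x < y) (w : List ℕ) :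
    NoMatch12 (w.filter (fun a => a = x ∨ a = y)) ↔ ¬ List.Sublist [x, y] w := by
  unfold NoMatch12 List.Chain'
  rw [List.isChain_iff_pairwise, List.pairwise_iff_forall_sublist]
  constructor
  · intro h hsub
    have h2 : List.Sublist ([x, y].filter (fun a => a = x ∨ a = y))
        (w.filter (fun a => a = x ∨ a = y)) := hsub.filter _
    simp only [List.filter, decide_eq_true_eq] at h2
    have : List.Sublist ([x, y] : List ℕ) (w.filter (fun a => a = x ∨ a = y)) := by
      simpa using h2
    exact absurd (h this) (by omega)
  · intro h a b hab
    have haw : a ∈ w.filter (fun a => a = x ∨ a = y) :=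
      hab.subset (by simp)
    have hbw : b ∈ w.filter (fun a => a = x ∨ a = y) :=
      hab.subset (by simp)
    have ha : a = x ∨ a = y := by simpa using (List.mem_filter.mp haw).2
    have hb : b = x ∨ b = y := by simpa using (List.mem_filter.mp hbw).2
    have habw : List.Sublist [a, b] w := hab.trans (List.filter_sublist (l := w))
    rcases ha with rfl | rfl <;> rcases hb with rfl | rfl
    · exact le_refl _
    · exact absurd habw h
    · omega
    · exact le_refl _

/-- If `[a,b]` and `[c,d]` are sublists of `w`, then `[c,b]` or `[a,d]` is. -/
lemma cross_sublist {a b c d : ℕ} : ∀ w : List ℕ,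
    List.Sublist [a, b] w → List.Sublist [c, d] w → List.Sublist [c, b] w ∨ List.Sublist [a, d] w := by
  intro w
  induction w with
  | nil => intro h1; cases h1
  | cons x w ih =>
    intro h1 h2
    cases h1 with
    | cons _ h1' =>
      cases h2 with
      | cons _ h2' =>
        rcases ih h1' h2' with h | h
        · exact Or.inl (h.cons x)
        · exact Or.inr (h.cons x)
      | cons_cons _ h2' =>
        -- x = c, [d] <+ w; b ∈ w from h1'
        have hb : b ∈ w := h1'.subset (by simp)
        exact Or.inl (List.Sublist.cons₂ _ (List.singleton_sublist.mpr hb))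
    | cons_cons _ h1' =>
      -- x = a, [b] <+ w
      have hd : d ∈ w := by
        cases h2 with
        | cons _ h2' => exact h2'.subset (by simp)
        | cons_cons _ h2' => exact (List.singleton_sublist.mp h2')
      exact Or.inr (List.Sublist.cons₂ _ (List.singleton_sublist.mpr hd))

/-- a labeled graph containing vertices `i, j, k, ℓ` with
`max {i,j} < min {k,ℓ}` whose only edges among them are `ik` and `jℓ` is not
12-representable. -/
theorem stmt_8 (V : Finset ℕ) (E : ℕ → ℕ → Prop) (hsym : Symmetric E)
    (i j k l : ℕ) (hi : i ∈ V) (hj : j ∈ V) (hk : k ∈ V) (hl : l ∈ V)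
    (hij : i ≠ j) (hkl : k ≠ l)
    (hlt : max i j < min k l)
    (eik : E i k) (ejl : E j l)
    (nij : ¬ E i j) (nil : ¬ E i l) (njk : ¬ E j k) (nkl : ¬ E k l) :
    ¬ ∃ w, Rep12 V E w := by
  rintro ⟨w, _, _, hrep⟩
  have hik : i < k := lt_of_le_of_lt (le_max_left i j) (lt_of_lt_of_le hlt (min_le_left k l))
  have hil : i < l := lt_of_le_of_lt (le_max_left i j) (lt_of_lt_of_le hlt (min_le_right k l))
  have hjk : j < k := lt_of_le_of_lt (le_max_right i j) (lt_of_lt_of_le hlt (min_le_left k l))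
  have hjl : j < l := lt_of_le_of_lt (le_max_right i j) (lt_of_lt_of_le hlt (min_le_right k l))
  have Hik : ¬ List.Sublist [i, k] w :=
    (noMatch12_iff_not_sublist hik w).mp ((hrep i hi k hk hik.ne).mp eik)
  have Hjl : ¬ List.Sublist [j, l] w :=
    (noMatch12_iff_not_sublist hjl w).mp ((hrep j hj l hl hjl.ne).mp ejl)
  have Hil : List.Sublist [i, l] w := by
    by_contra h
    exact nil ((hrep i hi l hl hil.ne).mpr ((noMatch12_iff_not_sublist hil w).mpr h))
  have Hjk : List.Sublist [j, k] w := by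
    by_contra h
    exact njk ((hrep j hj k hk hjk.ne).mpr ((noMatch12_iff_not_sublist hjk w).mpr h))
  rcases cross_sublist w Hil Hjk with h | h
  · exact Hjl h
  · exact Hik h
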